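/- Let M be a Maya diagram with k-modular decomposition (M⁽⁰⁾,...,M⁽ᵏ⁻¹⁾), and let gᵢ be the genus of M⁽ⁱ⁾. Then M is (p, k)-cyclic where p = Σ_{i=0}^{k-1} (2gᵢ + 1); that is, there exist p integers μ₀,...,μ_{p-1} such that applying the flips φ_{μ₀},...,φ_{μ_{p-1}} to M yields M + k. -/

import Mathlib

open Classical in
/-- The flip at site `m`: toggle membership of `m` in `M`. -/
noncomputable def mayaFlip (m : ℤ) (M : Set ℤ) : Set ℤ :=
  if m ∈ M then M \ {m} else M ∪ {m}

/-- Composition of flips along a list of sites. -/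
noncomputable def flipList (l : List ℤ) (M : Set ℤ) : Set ℤ :=
  l.foldr mayaFlip M

/-- A Maya diagram. -/
def IsMayaDiagram (M : Set ℤ) : Prop :=
  (M ∩ Set.Ici 0).Finite ∧ (Set.Iio 0 \ M).Finite

/-- `Ξ(β) = (-∞,β₀) ∪ [β₁,β₂) ∪ ... ∪ [β_{2g-1},β_{2g})`. -/
def XiBlocks (g : ℕ) (β : Fin (2 * g + 1) → ℤ) : Set ℤ :=
  Set.Iio (β ⟨0, by omega⟩) ∪
    ⋃ i : Fin g, Set.Ico (β ⟨2 * (i : ℕ) + 1, by have := i.isLt; omega⟩)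
      (β ⟨2 * (i : ℕ) + 2, by have := i.isLt; omega⟩)

/-- `M + k = {m + k : m ∈ M}`. -/
def shiftSet (M : Set ℤ) (k : ℤ) : Set ℤ := (· + k) '' M

/-- `M` is `(p,k)`-cyclic: some composition of `p` flips maps `M` to `M + k`. -/
def MayaCyclic (M : Set ℤ) (p : ℕ) (k : ℤ) : Prop :=
  ∃ μ : List ℤ, μ.length = p ∧ flipList μ M = shiftSet M k

/-- The `i`-th component of the `k`-modular decomposition: `M⁽ⁱ⁾ = {m : km + i ∈ M}`. -/
def modComp (k : ℕ) (M : Set ℤ) (i : Fin k) : Set ℤ :=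
  {m : ℤ | (k : ℤ) * m + (i : ℤ) ∈ M}

/- ### Auxiliary lemmas -/

lemma mem_mayaFlip (m x : ℤ) (M : Set ℤ) : x ∈ mayaFlip m M ↔ Xor' (x ∈ M) (x = m) := by
  by_cases h : m ∈ M <;> by_cases hx : x = m <;>
    simp [mayaFlip, h, hx, Xor', Xor] <;> tauto

lemma mem_flipList (l : List ℤ) (hl : l.Nodup) (M : Set ℤ) (x : ℤ) :
    x ∈ flipList l M ↔ Xor' (x ∈ M) (x ∈ l) := by
  induction l with
  | nil => simp [flipList, Xor', Xor]
  | cons a l ih =>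
    obtain ⟨ha, hl'⟩ := List.nodup_cons.mp hl
    have hcons : flipList (a :: l) M = mayaFlip a (flipList l M) := rfl
    rw [hcons, mem_mayaFlip, ih hl']
    simp only [List.mem_cons, Xor', Xor]
    by_cases hx : x = a
    · subst hx; simp [ha]
    · simp [hx]

lemma initseg_mem {N : ℕ} (s : Finset (Fin N))
    (h : ∀ t t' : Fin N, t ≤ t' → t' ∈ s → t ∈ s) (t : Fin N) :
    t ∈ s ↔ (t : ℕ) < s.card := by
  constructor
  · intro ht
    have hsub : Finset.Iic t ⊆ s := fun u hu => h u t (Finset.mem_Iic.mp hu) ht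
    have := Finset.card_le_card hsub
    rw [Fin.card_Iic] at this; omega
  · intro ht
    by_contra hts
    have hsub : s ⊆ Finset.Iio t := by
      intro u hu
      rw [Finset.mem_Iio]
      by_contra hut
      exact hts (h t u (le_of_not_gt hut) hu)
    have := Finset.card_le_card hsub
    rw [Fin.card_Iio] at this; omega

lemma mem_Xi_iff (g : ℕ) (β : Fin (2 * g + 1) → ℤ) (q : ℤ) :
    q ∈ XiBlocks g β ↔ q < β ⟨0, by omega⟩ ∨
      ∃ j : Fin g, β ⟨2 * (j : ℕ) + 1, by have := j.isLt; omega⟩ ≤ q ∧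
        q < β ⟨2 * (j : ℕ) + 2, by have := j.isLt; omega⟩ := by
  simp [XiBlocks, Set.mem_Iio, Set.mem_Ico, Set.mem_iUnion]

lemma mem_Xi_iff_even (g : ℕ) (β : Fin (2 * g + 1) → ℤ) (hβ : StrictMono β) (q : ℤ) :
    q ∈ XiBlocks g β ↔ Even (Finset.univ.filter (fun t => β t ≤ q)).card := by
  set s := Finset.univ.filter (fun t => β t ≤ q) with hs
  have hmem' : ∀ t : Fin (2 * g + 1), β t ≤ q ↔ (t : ℕ) < s.card := by
    intro t
    rw [← initseg_mem s (fun t t' htt' ht' => by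
      simp only [hs, Finset.mem_filter, Finset.mem_univ, true_and] at *
      exact le_trans (hβ.monotone htt') ht') t]
    simp [hs]
  have hcard : s.card ≤ 2 * g + 1 := by
    simpa using Finset.card_le_card (Finset.subset_univ s)
  rw [mem_Xi_iff]
  constructor
  · rintro (h0 | ⟨j, hj1, hj2⟩)
    · have h1 : s.card = 0 := by
        by_contra h
        exact absurd ((hmem' ⟨0, by omega⟩).mpr (show (0 : ℕ) < s.card by omega)) (not_le.mpr h0)
      rw [h1]; exact Even.zero
    · have a : 2 * (j : ℕ) + 1 < s.card :=
        (hmem' ⟨2 * (j : ℕ) + 1, by have := j.isLt; omega⟩).mp hj1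
      have b : ¬ (2 * (j : ℕ) + 2 < s.card) := fun h =>
        absurd ((hmem' ⟨2 * (j : ℕ) + 2, by have := j.isLt; omega⟩).mpr h) (not_le.mpr hj2)
      exact ⟨(j : ℕ) + 1, by omega⟩
  · rintro ⟨r, hr⟩
    rcases Nat.eq_zero_or_pos r with h0 | hpos
    · left
      by_contra h
      have hv : (0 : ℕ) < s.card := (hmem' ⟨0, by omega⟩).mp (not_lt.mp h)
      omega
    · right
      have hrg : r ≤ g := by omega
      refine ⟨⟨r - 1, by omega⟩, ?_, ?_⟩
      · exact (hmem' _).mpr (by simp; omega)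
      · by_contra h
        have := (hmem' _).mp (not_lt.mp h)
        simp at this; omega

lemma xi_shift (g : ℕ) (β : Fin (2 * g + 1) → ℤ) (hβ : StrictMono β) (q : ℤ) :
    q - 1 ∈ XiBlocks g β ↔ Xor' (q ∈ XiBlocks g β) (∃ t, β t = q) := by
  by_cases hr : ∃ t, β t = q
  · obtain ⟨t0, ht0⟩ := hr
    have hr' : ∃ t, β t = q := ⟨t0, ht0⟩
    have ht0n : t0 ∉ Finset.univ.filter (fun t => β t ≤ q - 1) := by
      simp [ht0]
    have hset : Finset.univ.filter (fun t => β t ≤ q) =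
        insert t0 (Finset.univ.filter (fun t => β t ≤ q - 1)) := by
      ext t
      simp only [Finset.mem_insert, Finset.mem_filter, Finset.mem_univ, true_and]
      constructor
      · intro h
        rcases eq_or_lt_of_le h with h' | h'
        · exact Or.inl (hβ.injective (h'.trans ht0.symm))
        · exact Or.inr (by omega)
      · rintro (rfl | h) <;> omega
    rw [mem_Xi_iff_even g β hβ, mem_Xi_iff_even g β hβ, hset,
      Finset.card_insert_of_notMem ht0n]
    simp only [Xor', Xor, hr', Nat.even_add_one]
    tauto
  · have hset : Finset.univ.filter (fun t => β t ≤ q) =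
        Finset.univ.filter (fun t => β t ≤ q - 1) := by
      ext t
      simp only [Finset.mem_filter, Finset.mem_univ, true_and]
      have : β t ≠ q := fun h => hr ⟨t, h⟩
      omega
    rw [mem_Xi_iff_even g β hβ, mem_Xi_iff_even g β hβ, ← hset]
    simp only [Xor', Xor]
    tauto

lemma resid (k : ℕ) (hk : 1 ≤ k) (a : ℤ) (i : Fin k) :
    ((k : ℤ) * a + (i : ℤ)) % (k : ℤ) = (i : ℤ) := by
  have h1 : (0 : ℤ) ≤ (i : ℤ) := Int.ofNat_nonneg _
  have h2 : (i : ℤ) < (k : ℤ) := by exact_mod_cast i.isLt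
  rw [add_comm, Int.add_mul_emod_self_left]
  exact Int.emod_eq_of_lt h1 h2

/-- If the `k`-modular components of a Maya diagram `M` have genera `g₀,...,g_{k-1}`,
then `M` is `(p,k)`-cyclic with `p = Σᵢ (2gᵢ + 1)`. -/
theorem maya_cyclic_of_modular_genera (k : ℕ) (hk : 1 ≤ k) (M : Set ℤ)
    (hM : IsMayaDiagram M) (g : Fin k → ℕ)
    (β : ∀ i : Fin k, Fin (2 * g i + 1) → ℤ)
    (hβ : ∀ i : Fin k, StrictMono (β i))
    (hXi : ∀ i : Fin k, modComp k M i = XiBlocks (g i) (β i)) :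
    MayaCyclic M (∑ i : Fin k, (2 * g i + 1)) (k : ℤ) := by
  have hk0 : (0 : ℤ) < (k : ℤ) := by exact_mod_cast hk
  set μ : List ℤ := (List.finRange k).flatMap
    (fun i => (List.finRange (2 * g i + 1)).map (fun t => (k : ℤ) * β i t + (i : ℤ))) with hμ
  -- length
  have hlen : μ.length = ∑ i : Fin k, (2 * g i + 1) := by
    rw [hμ, List.length_flatMap, ← List.ofFn_eq_map, List.sum_ofFn]
    apply Finset.sum_congr rfl
    intro i _
    simp
  -- no duplicates
  have hinj : ∀ i : Fin k, Function.Injective (fun t => (k : ℤ) * β i t + (i : ℤ)) := by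
    intro i t t' h
    simp only at h
    have : (k : ℤ) * β i t = (k : ℤ) * β i t' := by omega
    exact (hβ i).injective (mul_left_cancel₀ (ne_of_gt hk0) this)
  have hnodup : μ.Nodup := by
    rw [hμ, List.nodup_flatMap]
    constructor
    · intro i _
      exact (List.nodup_finRange _).map (hinj i)
    · refine (List.nodup_finRange k).imp ?_
      intro i j hij x hxi hxj
      simp only [List.mem_map, List.mem_finRange, true_and] at hxi hxj
      obtain ⟨t, ht⟩ := hxi
      obtain ⟨t', ht'⟩ := hxj
      have e1 := resid k hk (β i t) i
      have e2 := resid k hk (β j t') j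
      rw [ht] at e1; rw [ht'] at e2
      have : ((i : ℕ) : ℤ) = ((j : ℕ) : ℤ) := by rw [← e1, ← e2]
      exact hij (Fin.ext (by exact_mod_cast this))
  refine ⟨μ, hlen, ?_⟩
  ext x
  rw [mem_flipList μ hnodup M x]
  have hx_shift : x ∈ shiftSet M (k : ℤ) ↔ x - (k : ℤ) ∈ M := by
    constructor
    · rintro ⟨y, hy, rfl⟩; simpa using hy
    · intro h; exact ⟨x - k, h, by ring⟩
  rw [hx_shift]
  -- residue decomposition of x
  set i0 : Fin k := ⟨(x % (k : ℤ)).toNat, by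
    have h1 := Int.emod_nonneg x (ne_of_gt hk0)
    have h2 := Int.emod_lt_of_pos x hk0
    omega⟩ with hi0
  have hi0v : (i0 : ℤ) = x % (k : ℤ) := by
    have h1 := Int.emod_nonneg x (ne_of_gt hk0)
    show ((x % (k : ℤ)).toNat : ℤ) = x % (k : ℤ)
    exact Int.toNat_of_nonneg h1
  set q : ℤ := x / (k : ℤ) with hq
  have hxq : x = (k : ℤ) * q + (i0 : ℤ) := by
    rw [hi0v, hq]; exact (Int.mul_ediv_add_emod x k).symm
  have h1 : x ∈ M ↔ q ∈ XiBlocks (g i0) (β i0) := by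
    rw [← hXi i0]
    constructor
    · intro h; exact by rw [modComp, Set.mem_setOf_eq, ← hxq]; exact h
    · intro h; rw [hxq]; exact h
  have h2 : x - (k : ℤ) ∈ M ↔ q - 1 ∈ XiBlocks (g i0) (β i0) := by
    rw [← hXi i0]
    have : x - (k : ℤ) = (k : ℤ) * (q - 1) + (i0 : ℤ) := by rw [hxq]; ring
    rw [this]; rfl
  have h3 : x ∈ μ ↔ ∃ t, β i0 t = q := by
    rw [hμ]
    simp only [List.mem_flatMap, List.mem_map, List.mem_finRange, true_and]
    constructor
    · rintro ⟨i, t, ht⟩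
      have e1 := resid k hk (β i t) i
      rw [ht] at e1
      have hii : i = i0 := Fin.ext (by
        have hc : ((i : ℕ) : ℤ) = ((i0 : ℕ) : ℤ) := by rw [hi0v]; exact e1.symm
        exact_mod_cast hc)
      subst hii
      refine ⟨t, ?_⟩
      have h5 : (k : ℤ) * β i0 t = (k : ℤ) * q := by omega
      exact mul_left_cancel₀ (ne_of_gt hk0) h5
    · rintro ⟨t, ht⟩
      exact ⟨i0, t, by rw [ht, ← hxq]⟩
  rw [h1, h2, h3]
  exact (xi_shift (g i0) (β i0) (hβ i0) q).symm
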